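/- Let n ≥ 1, A = {a₁,…,aₙ}, ℓ ∈ ℕ, and let u₁,…,uₙ ∈ A* all have length ℓ such that for each position i ∈ {1,…,ℓ}, the letters u₁[i],…,uₙ[i] form a permutation of A. Then (a₁a₂⋯aₙ)^ℓ ∈ u₁ ⧢ u₂ ⧢ ⋯ ⧢ uₙ, and the word (a₁a₂⋯aₙ)^ℓ a₁ is not in u₁ ⧢ ⋯ ⧢ uₙ, while (a₁⋯aₙ)^ℓ a₁ ∼_ℓ (a₁⋯aₙ)^ℓ (both words contain every word of length ≤ ℓ over A as a subword). -/

import Mathlib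

open List

variable {A : Type*}

/-- Extract the subword of `x` at positions `K`. -/
def extractW (x : List A) (K : Finset (Fin x.length)) : List A :=
  ((List.finRange x.length).filter (fun i => i ∈ K)).map x.get

/-- `InterpW C u v x` : `x` is a shuffle of `u` and `v` with possible sharing of letters in `C`. -/
def InterpW (C : Set A) (u v x : List A) : Prop :=
  ∃ K K' : Finset (Fin x.length), K ∪ K' = Finset.univ ∧
    extractW x K = u ∧ extractW x K' = v ∧ ∀ a ∈ extractW x (K ∩ K'), a ∈ C

/-- Interpolation product of languages. -/
def interpL (C : Set A) (L L' : Set (List A)) : Set (List A) :=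
  {x | ∃ u ∈ L, ∃ v ∈ L', InterpW C u v x}

/-- Shuffle product of languages. -/
def shuffleL (L L' : Set (List A)) : Set (List A) := interpL ∅ L L'

/-- Simon's congruence: same scattered subwords of length at most `k`. -/
def SimK (k : ℕ) (u v : List A) : Prop :=
  ∀ w : List A, w.length ≤ k → (w.Sublist u ↔ w.Sublist v)

/-- Piecewise-testability: union of `∼ₖ`-classes for some `k`. -/
def PT (L : Set (List A)) : Prop :=
  ∃ k, ∀ u v : List A, SimK k u v → (u ∈ L ↔ v ∈ L)

/-- A DFA is acyclic when every cycle is a self-loop. -/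
def DFA.Acyclic {σ : Type*} (M : DFA A σ) : Prop :=
  ∀ p q (u v : List A), M.evalFrom p u = q → M.evalFrom q v = p → p = q

/-- A language is ℛ-trivial iff it is recognized by a finite acyclic DFA. -/
def RTrivial (L : Set (List A)) : Prop :=
  ∃ (σ : Type) (_ : Fintype σ) (M : DFA A σ), M.Acyclic ∧ ∀ x, x ∈ M.accepts ↔ x ∈ L

def pullS {m : ℕ} (S : Finset (Fin (m+1))) : Finset (Fin m) :=
  Finset.univ.filter (fun i => i.succ ∈ S)

lemma extract_cons (a : A) (x : List A) (S : Finset (Fin (x.length+1))) :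
    extractW (a :: x) S =
      (if (0 : Fin (x.length+1)) ∈ S then [a] else []) ++ extractW x (pullS S) := by
  unfold extractW pullS
  show map (a :: x).get (List.filter (fun i => i ∈ S) (finRange (x.length+1))) = _
  rw [List.finRange_succ, List.filter_cons, List.filter_map]
  by_cases h0 : (0 : Fin (x.length+1)) ∈ S <;>
    simp [h0, Function.comp, Finset.mem_filter] <;> rfl

lemma pullS_inter {m : ℕ} (S T : Finset (Fin (m+1))) :
    pullS (S ∩ T) = pullS S ∩ pullS T := by
  ext i; simp [pullS]

lemma interp_cons_left {u v x : List A} (a : A) (h : InterpW (∅ : Set A) u v x) :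
    InterpW (∅ : Set A) (a :: u) v (a :: x) := by
  obtain ⟨K, K', hU, hK, hK', hI⟩ := h
  set e := Fin.succEmb x.length with he
  set K₀ : Finset (Fin (x.length+1)) := insert 0 (K.map e) with hK₀
  set K₀' : Finset (Fin (x.length+1)) := K'.map e with hK₀'
  have pul : pullS K₀ = K := by
    ext i; simp [pullS, hK₀, he, Fin.succ_ne_zero]
  have pul' : pullS K₀' = K' := by
    ext i; simp [pullS, hK₀', he]
  have h0 : (0 : Fin (x.length+1)) ∈ K₀ := by simp [hK₀]
  have h0' : (0 : Fin (x.length+1)) ∉ K₀' := by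
    simp [hK₀', he]
  refine ⟨K₀, K₀', ?_, ?_, ?_, ?_⟩
  · ext i
    rcases Fin.eq_zero_or_eq_succ i with rfl | ⟨j, rfl⟩
    · simp [h0]
    · have : j ∈ K ∪ K' := by rw [hU]; exact Finset.mem_univ j
      simp only [Finset.mem_union] at this
      simp only [Finset.mem_union, hK₀, hK₀', Finset.mem_insert, Finset.mem_map, he]
      simp only [Fin.succEmb, Function.Embedding.coeFn_mk]
      constructor
      · intro _; exact Finset.mem_univ _
      · intro _
        rcases this with h | h
        · exact Or.inl (Or.inr ⟨j, h, rfl⟩)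
        · exact Or.inr ⟨j, h, rfl⟩
  · rw [show extractW (a :: x) K₀ = _ from extract_cons a x K₀, if_pos h0, pul, hK]; rfl
  · rw [show extractW (a :: x) K₀' = _ from extract_cons a x K₀', if_neg h0', pul', hK']; rfl
  · intro b hb
    rw [show extractW (a :: x) (K₀ ∩ K₀') = _ from extract_cons a x (K₀ ∩ K₀'),
      if_neg (fun hc => h0' (Finset.mem_of_mem_inter_right hc)), pullS_inter, pul, pul'] at hb
    exact hI b (by simpa using hb)

lemma interp_cons_right {u v x : List A} (a : A) (h : InterpW (∅ : Set A) u v x) :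
    InterpW (∅ : Set A) u (a :: v) (a :: x) := by
  obtain ⟨K, K', hU, hK, hK', hI⟩ := h
  set e := Fin.succEmb x.length with he
  set K₀ : Finset (Fin (x.length+1)) := K.map e with hK₀
  set K₀' : Finset (Fin (x.length+1)) := insert 0 (K'.map e) with hK₀'
  have pul : pullS K₀ = K := by
    ext i; simp [pullS, hK₀, he]
  have pul' : pullS K₀' = K' := by
    ext i; simp [pullS, hK₀', he, Fin.succ_ne_zero]
  have h0' : (0 : Fin (x.length+1)) ∈ K₀' := by simp [hK₀']
  have h0 : (0 : Fin (x.length+1)) ∉ K₀ := by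
    simp [hK₀, he]
  refine ⟨K₀, K₀', ?_, ?_, ?_, ?_⟩
  · ext i
    rcases Fin.eq_zero_or_eq_succ i with rfl | ⟨j, rfl⟩
    · simp [h0']
    · have : j ∈ K ∪ K' := by rw [hU]; exact Finset.mem_univ j
      simp only [Finset.mem_union] at this
      simp only [Finset.mem_union, hK₀, hK₀', Finset.mem_insert, Finset.mem_map, he]
      simp only [Fin.succEmb, Function.Embedding.coeFn_mk]
      constructor
      · intro _; exact Finset.mem_univ _
      · intro _
        rcases this with h | h
        · exact Or.inl ⟨j, h, rfl⟩
        · exact Or.inr (Or.inr ⟨j, h, rfl⟩)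
  · rw [show extractW (a :: x) K₀ = _ from extract_cons a x K₀, if_neg h0, pul, hK]; rfl
  · rw [show extractW (a :: x) K₀' = _ from extract_cons a x K₀', if_pos h0', pul', hK']; rfl
  · intro b hb
    rw [show extractW (a :: x) (K₀ ∩ K₀') = _ from extract_cons a x (K₀ ∩ K₀'),
      if_neg (fun hc => h0 (Finset.mem_of_mem_inter_left hc)), pullS_inter, pul, pul'] at hb
    exact hI b (by simpa using hb)

lemma interp_nil : InterpW (∅ : Set A) [] [] [] := by
  refine ⟨∅, ∅, ?_, rfl, rfl, by simp [extractW]⟩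
  simp

def Fold (n : ℕ) (v : Fin n → List A) : Set (List A) :=
  (List.ofFn (fun j => ({v j} : Set (List A)))).foldr shuffleL {([] : List A)}

lemma Fold_succ (n : ℕ) (v : Fin (n+1) → List A) :
    Fold (n+1) v = shuffleL {v 0} (Fold n (v ∘ Fin.succ)) := by
  simp [Fold, List.ofFn_succ, Function.comp]

lemma mem_shuffleL_singleton {u : List A} {L : Set (List A)} {x : List A} :
    x ∈ shuffleL {u} L ↔ ∃ r ∈ L, InterpW ∅ u r x := by
  simp [shuffleL, interpL]

lemma Fold_nil (n : ℕ) : ([] : List A) ∈ Fold n (fun _ => []) := by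
  induction n with
  | zero => simp [Fold]
  | succ n ih =>
      rw [Fold_succ]
      exact mem_shuffleL_singleton.mpr ⟨[], ih, interp_nil⟩

lemma Fold_cons (n : ℕ) : ∀ (v : Fin n → List A) (x : List A) (j : Fin n) (a : A),
    x ∈ Fold n v → (a :: x) ∈ Fold n (Function.update v j (a :: v j)) := by
  induction n with
  | zero => exact fun _ _ j => j.elim0
  | succ n ih =>
      intro v x j a hx
      rw [Fold_succ] at hx
      obtain ⟨r, hr, hI⟩ := mem_shuffleL_singleton.mp hx
      rw [Fold_succ]
      induction j using Fin.cases with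
      | zero =>
          have h1 : Function.update v 0 (a :: v 0) 0 = a :: v 0 := by simp
          have h2 : Function.update v 0 (a :: v 0) ∘ Fin.succ = v ∘ Fin.succ := by
            funext i
            simp [Function.update, Fin.succ_ne_zero]
          rw [h1, h2]
          exact mem_shuffleL_singleton.mpr ⟨r, hr, interp_cons_left a hI⟩
      | succ i =>
          have h1 : Function.update v i.succ (a :: v i.succ) 0 = v 0 := by
            simp [Function.update, (Fin.succ_ne_zero i).symm]
          have h2 : Function.update v i.succ (a :: v i.succ) ∘ Fin.succ
              = Function.update (v ∘ Fin.succ) i (a :: (v ∘ Fin.succ) i) := by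
            rw [← Function.update_comp_eq_of_injective _ (Fin.succ_injective n)]
            rfl
          rw [h1, h2]
          exact mem_shuffleL_singleton.mpr
            ⟨a :: r, ih (v ∘ Fin.succ) r i a hr, interp_cons_right a hI⟩

lemma Fold_prep (n : ℕ) (σ : Equiv.Perm (Fin n)) (v : Fin n → List (Fin n)) :
    ∀ (s : List (Fin n)), s.Nodup → ∀ (x : List (Fin n)),
    x ∈ Fold n v → s ++ x ∈ Fold n (fun j => if σ j ∈ s then σ j :: v j else v j) := by
  intro s
  induction s with
  | nil => intro _ x hx; simpa using hx
  | cons a s ih =>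
      intro hnd x hx
      have hna : a ∉ s := (List.nodup_cons.mp hnd).1
      have hs : s.Nodup := (List.nodup_cons.mp hnd).2
      have h1 := Fold_cons n _ (s ++ x) (σ.symm a) a (ih hs x hx)
      have h2 : Function.update (fun j => if σ j ∈ s then σ j :: v j else v j) (σ.symm a)
            (a :: (fun j => if σ j ∈ s then σ j :: v j else v j) (σ.symm a))
          = fun j => if σ j ∈ a :: s then σ j :: v j else v j := by
        funext j
        by_cases hj : j = σ.symm a
        · subst hj
          have hσ : σ (σ.symm a) = a := σ.apply_symm_apply a
          simp [Function.update_self, hσ, hna]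
        · have hσ : σ j ≠ a := fun hc => hj (by rw [← hc]; simp)
          rw [Function.update_of_ne hj]
          simp [List.mem_cons, hσ]
      rw [h2] at h1
      simpa using h1

lemma main1 : ∀ (ℓ : ℕ) (n : ℕ) (u : Fin n → List (Fin n))
    (hlen : ∀ j, (u j).length = ℓ)
    (_ : ∀ i (hi : i < ℓ),
      Function.Bijective (fun j : Fin n => (u j).get ⟨i, by rw [hlen]; exact hi⟩)),
    (List.replicate ℓ (List.ofFn (id : Fin n → Fin n))).flatten ∈ Fold n u := by
  intro ℓ
  induction ℓ with
  | zero =>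
      intro n u hlen _
      have : u = fun _ => [] := funext fun j => List.length_eq_zero_iff.mp (hlen j)
      subst this
      simpa using Fold_nil n
  | succ ℓ ih =>
      intro n u hlen hperm
      have hne : ∀ j, u j ≠ [] := fun j h => by have := hlen j; rw [h] at this; simp at this
      set t : Fin n → List (Fin n) := fun j => (u j).tail with ht
      have htlen : ∀ j, (t j).length = ℓ := by
        intro j; simp [ht, hlen j]
      have hget : ∀ j i (h : i < (t j).length) (h' : i + 1 < (u j).length),
          (t j).get ⟨i, h⟩ = (u j).get ⟨i+1, h'⟩ := by
        intro j i h h'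
        exact List.get_tail (u j) i h h' 
      have htperm : ∀ i (hi : i < ℓ),
          Function.Bijective (fun j : Fin n => (t j).get ⟨i, by rw [htlen]; exact hi⟩) := by
        intro i hi
        have := hperm (i+1) (by omega)
        convert this using 2 with j
        exact hget j i _ _
      have hIH := ih n t htlen htperm
      set σfun : Fin n → Fin n := fun j => (u j).get ⟨0, by rw [hlen]; omega⟩ with hσf
      have hbij : Function.Bijective σfun := hperm 0 (by omega)
      set σ : Equiv.Perm (Fin n) := Equiv.ofBijective σfun hbij with hσ
      have happ : ∀ j, σ j = σfun j := fun j => rfl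
      have hW : (List.replicate (ℓ+1) (List.ofFn (id : Fin n → Fin n))).flatten
          = List.ofFn (id : Fin n → Fin n)
            ++ (List.replicate ℓ (List.ofFn (id : Fin n → Fin n))).flatten := by
        rw [List.replicate_succ, List.flatten_cons]
      have hmem := Fold_prep n σ t (List.ofFn (id : Fin n → Fin n))
        (List.nodup_ofFn.mpr Function.injective_id)
        ((List.replicate ℓ (List.ofFn (id : Fin n → Fin n))).flatten) hIH
      have heq : (fun j => if σ j ∈ List.ofFn (id : Fin n → Fin n) then σ j :: t j else t j)
          = u := by
        funext j
        have hmem' : σ j ∈ List.ofFn (id : Fin n → Fin n) := by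
          rw [List.mem_ofFn]; exact ⟨σ j, rfl⟩
        rw [if_pos hmem']
        have h0 : σ j = (u j).head (hne j) := by
          show (u j).get ⟨0, _⟩ = _
          simp only [List.get_eq_getElem]
          exact List.getElem_zero _
        rw [h0]
        exact List.cons_head_tail (hne j)
      rw [heq] at hmem
      rw [hW]
      exact hmem

lemma extract_length (x : List A) (K : Finset (Fin x.length)) :
    (extractW x K).length = K.card := by
  unfold extractW
  rw [List.length_map]
  have hnd : ((List.finRange x.length).filter (fun i => i ∈ K)).Nodup :=
    List.Nodup.filter _ (List.nodup_finRange _)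
  rw [← List.toFinset_card_of_nodup hnd, List.toFinset_filter, List.toFinset_finRange]
  congr 1
  ext i
  simp

lemma interp_length {u v x : List A} (h : InterpW (∅ : Set A) u v x) :
    x.length = u.length + v.length := by
  obtain ⟨K, K', hU, hK, hK', hI⟩ := h
  have hdisj : Disjoint K K' := by
    rw [Finset.disjoint_iff_inter_eq_empty]
    by_contra hc
    obtain ⟨i, hi⟩ := Finset.nonempty_iff_ne_empty.mpr hc
    have : (extractW x (K ∩ K')).length = (K ∩ K').card := extract_length x _
    have hpos : 0 < (extractW x (K ∩ K')).length := by
      rw [this]; exact Finset.card_pos.mpr ⟨i, hi⟩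
    obtain ⟨a, ha⟩ := List.exists_mem_of_length_pos hpos
    exact hI a ha
  have := Finset.card_union_of_disjoint hdisj
  rw [hU, Finset.card_univ, Fintype.card_fin] at this
  rw [← hK, ← hK', extract_length, extract_length]
  exact this

lemma Fold_length (n : ℕ) : ∀ (v : Fin n → List A) (x : List A),
    x ∈ Fold n v → x.length = ∑ j, (v j).length := by
  induction n with
  | zero =>
      intro v x hx
      simp only [Fold, List.ofFn_zero, List.foldr_nil, Set.mem_singleton_iff] at hx
      subst hx; simp
  | succ n ih =>
      intro v x hx
      rw [Fold_succ] at hx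
      obtain ⟨r, hr, hI⟩ := mem_shuffleL_singleton.mp hx
      rw [Fin.sum_univ_succ, interp_length hI, ih _ r hr]
      rfl

lemma sub_all (n : ℕ) : ∀ (ℓ : ℕ) (w : List (Fin n)), w.length ≤ ℓ →
    w.Sublist ((List.replicate ℓ (List.ofFn (id : Fin n → Fin n))).flatten) := by
  intro ℓ
  induction ℓ with
  | zero =>
      intro w hw
      rw [List.length_eq_zero_iff.mp (Nat.le_zero.mp hw)]
      simp
  | succ ℓ ih =>
      intro w hw
      cases w with
      | nil => simp
      | cons a w =>
          rw [List.replicate_succ, List.flatten_cons]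
          have h1 : [a].Sublist (List.ofFn (id : Fin n → Fin n)) := by
            rw [List.singleton_sublist, List.mem_ofFn]
            exact ⟨a, rfl⟩
          have h2 := ih w (by simpa using hw)
          exact List.Sublist.append h1 h2

theorem stmt19 (n : ℕ) (hn : 1 ≤ n) (ℓ : ℕ) (u : Fin n → List (Fin n))
    (hlen : ∀ j, (u j).length = ℓ)
    (hperm : ∀ i (hi : i < ℓ),
      Function.Bijective (fun j : Fin n => (u j).get ⟨i, by rw [hlen]; exact hi⟩)) :
    (List.replicate ℓ (List.ofFn (id : Fin n → Fin n))).flatten ∈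
      (List.ofFn (fun j => ({u j} : Set (List (Fin n))))).foldr shuffleL {([] : List (Fin n))} ∧
    (List.replicate ℓ (List.ofFn (id : Fin n → Fin n))).flatten ++ [(⟨0, hn⟩ : Fin n)] ∉
      (List.ofFn (fun j => ({u j} : Set (List (Fin n))))).foldr shuffleL {([] : List (Fin n))} ∧
    (∀ w : List (Fin n), w.length ≤ ℓ →
      w.Sublist ((List.replicate ℓ (List.ofFn (id : Fin n → Fin n))).flatten)) ∧
    SimK ℓ ((List.replicate ℓ (List.ofFn (id : Fin n → Fin n))).flatten)
      ((List.replicate ℓ (List.ofFn (id : Fin n → Fin n))).flatten ++ [(⟨0, hn⟩ : Fin n)]) := by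
  refine ⟨main1 ℓ n u hlen hperm, ?_, sub_all n ℓ, ?_⟩
  · intro hmem
    have hlen2 := Fold_length n u _ hmem
    have hflat : ((List.replicate ℓ (List.ofFn (id : Fin n → Fin n))).flatten).length = ℓ * n := by
      simp [List.length_flatten]
    have hsum : ∑ j, (u j).length = n * ℓ := by
      rw [Finset.sum_congr rfl (fun j _ => hlen j), Finset.sum_const, Finset.card_univ,
        Fintype.card_fin, smul_eq_mul]
    rw [List.length_append, hflat, hsum, Nat.mul_comm n ℓ] at hlen2
    simp at hlen2
  · intro w hw
    constructor
    · intro h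
      exact h.trans (List.sublist_append_left _ _)
    · intro _
      exact sub_all n ℓ w hw
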